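/- arXiv:2501.19195 — 2 statements merged into one kernel-verified Lean document; each statement's English description precedes it below -/
import Mathlib

section
/- In the balanced two-class Gaussian model, for the model f(x) = σ(wᵀx), the conditional class probability given the score satisfies P(Y=1 | wᵀX = z) = σ( (⟨w,w*⟩_Σ / ||w||_Σ²) · z ), where w* = 2Σ⁻¹μ. -/
open Matrix

noncomputable section

/-- The sigmoid function. -/
def sigmoid (t : ℝ) : ℝ := 1 / (1 + Real.exp (-t))

/-- Unnormalized one-dimensional Gaussian density with mean `m` and variance `v`
(normalizing constants cancel in the Bayes ratio below). -/
def gaussDensity1 (m v z : ℝ) : ℝ := Real.exp (-((z - m) ^ 2) / (2 * v))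

lemma bayes_ratio (m v z : ℝ) (hv : 0 < v) :
    gaussDensity1 m v z / (gaussDensity1 m v z + gaussDensity1 (-m) v z)
      = sigmoid (2 * m / v * z) := by
  unfold gaussDensity1 sigmoid
  have h1 : Real.exp (-((z - -m) ^ 2) / (2 * v))
      = Real.exp (-((z - m) ^ 2) / (2 * v)) * Real.exp (-(2 * m / v * z)) := by
    rw [← Real.exp_add]
    congr 1
    field_simp
    ring
  rw [h1]
  have hpos : (0:ℝ) < Real.exp (-((z - m) ^ 2) / (2 * v)) := Real.exp_pos _
  rw [div_eq_div_iff (by positivity) (by positivity)]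
  ring

/-- In the balanced two-class Gaussian model, the conditional class probability given the
score `wᵀX = z`, computed by Bayes' rule from the one-dimensional Gaussian mixture
`wᵀX ∼ ½ N(wᵀμ, wᵀΣw) + ½ N(−wᵀμ, wᵀΣw)`, equals
`σ((⟨w,w*⟩_Σ / ‖w‖_Σ²) · z)` with `w* = 2 Σ⁻¹ μ`. -/
theorem stmt12 {p : ℕ} (S : Matrix (Fin p) (Fin p) ℝ) (hS : S.PosDef)
    (μv : Fin p → ℝ) (w : Fin p → ℝ) (hw : w ≠ 0) (z : ℝ) :
    ((1 / 2) * gaussDensity1 (w ⬝ᵥ μv) (w ⬝ᵥ S.mulVec w) z)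
        / ((1 / 2) * gaussDensity1 (w ⬝ᵥ μv) (w ⬝ᵥ S.mulVec w) z
            + (1 / 2) * gaussDensity1 (-(w ⬝ᵥ μv)) (w ⬝ᵥ S.mulVec w) z)
      = sigmoid ((w ⬝ᵥ S.mulVec ((2 : ℝ) • S⁻¹.mulVec μv)) / (w ⬝ᵥ S.mulVec w) * z) := by
  have hv : 0 < w ⬝ᵥ S.mulVec w := by simpa using hS.dotProduct_mulVec_pos hw
  have hinv : S.mulVec (S⁻¹.mulVec μv) = μv := by
    rw [mulVec_mulVec, mul_nonsing_inv _ (isUnit_iff_ne_zero.mpr hS.det_pos.ne'),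
      one_mulVec]
  have key : w ⬝ᵥ S.mulVec ((2 : ℝ) • S⁻¹.mulVec μv) = 2 * (w ⬝ᵥ μv) := by
    rw [mulVec_smul, dotProduct_smul, hinv]; simp
  rw [key, ← bayes_ratio _ _ _ hv, ← mul_add,
    mul_div_mul_left _ _ (by norm_num : (1:ℝ)/2 ≠ 0)]
end
end

section
/- In the balanced two-class Gaussian model with model f(x) = σ(wᵀx), the rescaled weight vector w_s = s·w with s = ⟨w,w*⟩_Σ / ||w||_Σ² yields zero calibration error: σ(w_sᵀ x) = P(Y=1 | w_sᵀX = w_sᵀx) for almost every x, i.e., the rescaled model is calibrated, while its refinement error equals that of w. -/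
open Matrix MeasureTheory ProbabilityTheory NNReal ENNReal
open scoped Classical

noncomputable section

/-- The refinement error `R_ℓ(f) = E[e_ℓ(E[Y | f(X)])]` of the linear sigmoid model
`f(x) = σ(wᵀx)`, written with `E[Y | f(X)] = E[1_{Y=1} | wᵀX]`. -/
def refR {p : ℕ} {Ω : Type*} [MeasurableSpace Ω] (μ : Measure Ω)
    (X : Ω → Fin p → ℝ) (Y : Ω → ℝ) (eℓ : ℝ → ℝ) (w : Fin p → ℝ) : ℝ :=
  ∫ ω, eℓ (MeasureTheory.condExp
    (MeasurableSpace.comap (fun ω' => w ⬝ᵥ X ω') inferInstance) μ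
    (fun ω' => if Y ω' = 1 then (1 : ℝ) else 0) ω) ∂μ

lemma sigmoid_nonneg (t : ℝ) : 0 ≤ sigmoid t := by
  unfold sigmoid; positivity

lemma sigmoid_le_one (t : ℝ) : sigmoid t ≤ 1 := by
  unfold sigmoid
  rw [div_le_one (by positivity)]
  nlinarith [Real.exp_pos (-t)]

lemma measurable_sigmoid : Measurable sigmoid := by
  have : Continuous sigmoid := by
    unfold sigmoid
    exact continuous_const.div (by continuity) (fun t => by positivity)
  exact this.measurable

lemma sigmoid_pdf_identity {a c : ℝ} {v : ℝ≥0} (hv : v ≠ 0) (hc : c * v = 2 * a) (z : ℝ) :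
    sigmoid (c * z) * (gaussianPDFReal a v z + gaussianPDFReal (-a) v z)
      = gaussianPDFReal a v z := by
  have hv' : (0:ℝ) < v := lt_of_le_of_ne v.coe_nonneg (by exact_mod_cast (Ne.symm hv))
  simp only [gaussianPDFReal, sigmoid]
  have key : Real.exp (-(z - -a)^2 / (2*v)) = Real.exp (-(z-a)^2/(2*v)) * Real.exp (-(c*z)) := by
    rw [← Real.exp_add]
    congr 1
    field_simp
    linear_combination (2*z) * hc
  rw [key]
  have hE : (0:ℝ) < 1 + Real.exp (-(c*z)) := by positivity
  field_simp

lemma setIntegral_sigmoid_gaussian {a c : ℝ} {v : ℝ≥0} (hc : c * v = 2 * a)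
    {A : Set ℝ} (hA : MeasurableSet A) :
    ∫ z in A, sigmoid (c * z) ∂(gaussianReal a v)
      + ∫ z in A, sigmoid (c * z) ∂(gaussianReal (-a) v)
      = (gaussianReal a v A).toReal := by
  rcases eq_or_ne v 0 with hv | hv
  · subst hv
    have ha : a = 0 := by
      have : c * ((0:ℝ≥0):ℝ) = 2 * a := hc
      simpa using this.symm
    subst ha
    simp only [gaussianReal_zero_var, neg_zero]
    rw [setIntegral_dirac (fun z => sigmoid (c * z)) 0 A,
      Measure.dirac_apply' _ hA]
    by_cases h0 : (0:ℝ) ∈ A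
    · simp [h0, Set.indicator_of_mem, sigmoid, Real.exp_zero]
      norm_num
    · simp [h0, Set.indicator_of_notMem]
  · -- v ≠ 0
    have hmeas : Measurable fun z => sigmoid (c * z) :=
      measurable_sigmoid.comp (measurable_const.mul measurable_id)
    have hint : ∀ b : ℝ, ∫ z in A, sigmoid (c * z) ∂(gaussianReal b v)
        = ∫ z in A, sigmoid (c * z) * gaussianPDFReal b v z := by
      intro b
      rw [gaussianReal_of_var_ne_zero _ hv]
      have : gaussianPDF b v = fun z => (((gaussianPDFReal b v z).toNNReal : ℝ≥0) : ENNReal) := by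
        funext z; rw [gaussianPDF, ENNReal.ofReal]
      rw [this, restrict_withDensity hA,
        integral_withDensity_eq_integral_smul
          ((measurable_gaussianPDFReal b v).real_toNNReal) _]
      congr 1
      funext z
      rw [NNReal.smul_def, smul_eq_mul, Real.coe_toNNReal _ (gaussianPDFReal_nonneg b v z),
        mul_comm]
    rw [hint a, hint (-a)]
    have hintg : ∀ b : ℝ, IntegrableOn (fun z => sigmoid (c * z) * gaussianPDFReal b v z) A := by
      intro b
      refine Integrable.mono ((integrable_gaussianPDFReal b v).restrict) ?_ ?_
      · exact (hmeas.mul (measurable_gaussianPDFReal b v)).aestronglyMeasurable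
      · refine ae_of_all _ fun z => ?_
        rw [Real.norm_eq_abs, Real.norm_eq_abs, abs_mul,
          abs_of_nonneg (sigmoid_nonneg _), abs_of_nonneg (gaussianPDFReal_nonneg _ _ _)]
        exact mul_le_of_le_one_left (gaussianPDFReal_nonneg _ _ _) (sigmoid_le_one _)
    rw [← integral_add (hintg a) (hintg (-a))]
    have : ∀ z, sigmoid (c * z) * gaussianPDFReal a v z
        + sigmoid (c * z) * gaussianPDFReal (-a) v z = gaussianPDFReal a v z := by
      intro z
      rw [← mul_add]
      exact sigmoid_pdf_identity hv hc z
    rw [integral_congr_ae (ae_of_all _ (fun z => this z))]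
    rw [gaussianReal_apply_eq_integral _ hv,
      ENNReal.toReal_ofReal (integral_nonneg (fun z => gaussianPDFReal_nonneg _ _ _))]

lemma condexp_eq_sigmoid {Ω : Type*} [MeasurableSpace Ω] {μ : Measure Ω}
    [IsProbabilityMeasure μ] {Y : Ω → ℝ} (hY : Measurable Y)
    (hY1 : μ {ω | Y ω = 1} = 1 / 2) (hYm1 : μ {ω | Y ω = -1} = 1 / 2)
    {Z : Ω → ℝ} (hZ : Measurable Z) {a c : ℝ} {v : ℝ≥0}
    (h1 : Measure.map Z (μ[|{ω | Y ω = 1}]) = gaussianReal a v)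
    (h2 : Measure.map Z (μ[|{ω | Y ω = -1}]) = gaussianReal (-a) v)
    (hc : c * v = 2 * a) :
    (fun ω => sigmoid (c * Z ω)) =ᵐ[μ]
      MeasureTheory.condExp (MeasurableSpace.comap Z inferInstance) μ
        (fun ω' => if Y ω' = 1 then (1 : ℝ) else 0) := by
  set B : Set Ω := {ω | Y ω = 1} with hBdef
  set B' : Set Ω := {ω | Y ω = -1} with hB'def
  have hB : MeasurableSet B := by
    have := hY (measurableSet_singleton (1:ℝ)); simpa [Set.preimage, B] using this
  have hB' : MeasurableSet B' := by
    have := hY (measurableSet_singleton (-1:ℝ)); simpa [Set.preimage, B'] using this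
  have hμB : μ B = 1/2 := hY1
  have hμB' : μ B' = 1/2 := hYm1
  have h2ne : (1/2 : ℝ≥0∞) ≠ 0 := by norm_num
  have h2top : (1/2 : ℝ≥0∞) ≠ ∞ := by norm_num
  -- restrict decomposition
  have hcompl : (Bᶜ : Set Ω) =ᵐ[μ] B' := by
    rw [MeasureTheory.ae_eq_set]
    constructor
    · have hsub : B' ⊆ Bᶜ := by
        intro ω hω hω'
        have : Y ω = 1 := hω'
        have : Y ω = -1 := hω
        norm_num at *
        linarith
      have hμBc : μ Bᶜ = 1/2 := by
        rw [measure_compl hB (measure_ne_top μ B), hμB, measure_univ]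
        exact ENNReal.sub_eq_of_eq_add (by norm_num) (ENNReal.add_halves 1).symm
      rw [measure_diff hsub hB'.nullMeasurableSet (by rw [hμB']; norm_num), hμBc, hμB']
      simp
    · have : B' \ Bᶜ = ∅ := by
        ext ω
        simp only [Set.mem_diff, Set.mem_compl_iff, Set.mem_empty_iff_false, iff_false]
        rintro ⟨hω, hω'⟩
        rw [Set.not_notMem] at hω'
        have h1 : Y ω = -1 := hω
        have h2 : Y ω = 1 := hω'
        norm_num [h1] at h2
      rw [this]; simp
  have hrB : μ.restrict B = (1/2 : ℝ≥0∞) • μ[|B] := by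
    rw [ProbabilityTheory.cond, smul_smul, hμB, ENNReal.mul_inv_cancel h2ne h2top, one_smul]
  have hrB' : μ.restrict B' = (1/2 : ℝ≥0∞) • μ[|B'] := by
    rw [ProbabilityTheory.cond, smul_smul, hμB', ENNReal.mul_inv_cancel h2ne h2top, one_smul]
  have hμdec : μ = (1/2 : ℝ≥0∞) • μ[|B] + (1/2 : ℝ≥0∞) • μ[|B'] := by
    conv_lhs => rw [← Measure.restrict_add_restrict_compl (μ := μ) hB,
      Measure.restrict_congr_set hcompl, hrB, hrB']
  haveI hPB : IsProbabilityMeasure (μ[|B]) :=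
    cond_isProbabilityMeasure (by rw [hμB]; norm_num)
  haveI hPB' : IsProbabilityMeasure (μ[|B']) :=
    cond_isProbabilityMeasure (by rw [hμB']; norm_num)
  have hm : MeasurableSpace.comap Z inferInstance ≤ _ := hZ.comap_le
  haveI : SigmaFinite (μ.trim hm) := by infer_instance
  set g : Ω → ℝ := fun ω => sigmoid (c * Z ω) with hgdef
  have hgmeas : Measurable g := measurable_sigmoid.comp (measurable_const.mul hZ)
  have hgbound : ∀ ω, ‖g ω‖ ≤ 1 := fun ω => by
    rw [Real.norm_eq_abs, abs_of_nonneg (sigmoid_nonneg _)]; exact sigmoid_le_one _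
  have hgint : ∀ (ν : Measure Ω), IsFiniteMeasure ν → Integrable g ν := fun ν _ =>
    Integrable.mono' (integrable_const 1) hgmeas.aestronglyMeasurable (ae_of_all _ hgbound)
  set f : Ω → ℝ := fun ω' => if Y ω' = 1 then (1:ℝ) else 0 with hfdef
  have hfind : f = B.indicator (fun _ => (1:ℝ)) := by
    funext ω; by_cases h : Y ω = 1 <;> simp [f, B, Set.indicator, h]
  have hfint : Integrable f μ := by
    rw [hfind]; exact (integrable_const 1).indicator hB
  refine ae_eq_condExp_of_forall_setIntegral_eq hm hfint ?_ ?_ ?_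
  · intro s _ _
    exact (hgint μ inferInstance).integrableOn
  · rintro s ⟨A, hA, rfl⟩ -
    have hZA : MeasurableSet (Z ⁻¹' A) := hZ hA
    have hRHS : ∫ x in Z ⁻¹' A, f x ∂μ = (μ (Z ⁻¹' A ∩ B)).toReal := by
      rw [hfind, setIntegral_indicator hB, setIntegral_const, smul_eq_mul, mul_one, measureReal_def]
    have hBA : μ (Z ⁻¹' A ∩ B) = 1/2 * (gaussianReal a v A) := by
      have h1' := congrArg (fun ν : Measure ℝ => ν A) h1
      rw [Measure.map_apply hZ hA, cond_apply hB μ (Z ⁻¹' A)] at h1'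
      rw [Set.inter_comm, ← h1', hμB, ← mul_assoc, ENNReal.mul_inv_cancel h2ne h2top, one_mul]
    have hsetint : ∀ (ν : Measure Ω), IsProbabilityMeasure ν →
        ∫ x in Z ⁻¹' A, g x ∂ν = ∫ z in A, sigmoid (c * z) ∂(Measure.map Z ν) := by
      intro ν hν
      have hsig : Measurable fun z : ℝ => sigmoid (c * z) :=
        measurable_sigmoid.comp (measurable_const.mul measurable_id)
      exact (setIntegral_map hA hsig.aestronglyMeasurable hZ.aemeasurable).symm
    have hLHS : ∫ x in Z ⁻¹' A, g x ∂μ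
        = (1/2 : ℝ) * (∫ z in A, sigmoid (c * z) ∂(gaussianReal a v)
            + ∫ z in A, sigmoid (c * z) ∂(gaussianReal (-a) v)) := by
      conv_lhs => rw [hμdec]
      rw [Measure.restrict_add, Measure.restrict_smul, Measure.restrict_smul,
        integral_add_measure
          (((hgint _ inferInstance).restrict).smul_measure h2top)
          (((hgint _ inferInstance).restrict).smul_measure h2top),
        integral_smul_measure, integral_smul_measure,
        hsetint _ hPB, hsetint _ hPB', h1, h2]
      have : (1/2 : ℝ≥0∞).toReal = (1/2 : ℝ) := by norm_num
      rw [this, smul_eq_mul, smul_eq_mul]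
      ring
    rw [hLHS, hRHS, setIntegral_sigmoid_gaussian hc hA, hBA, ENNReal.toReal_mul]
    norm_num
  · refine StronglyMeasurable.aestronglyMeasurable (Measurable.stronglyMeasurable ?_)
    exact (measurable_sigmoid.comp (measurable_const.mul measurable_id)).comp
      (Measurable.of_comap_le le_rfl)

lemma comap_const_mul {c : ℝ} (hc : c ≠ 0) {Ω : Type*} (Z : Ω → ℝ) :
    MeasurableSpace.comap (fun ω => c * Z ω) inferInstance
      = MeasurableSpace.comap Z inferInstance := by
  have h1 : (fun ω => c * Z ω) = (fun t : ℝ => c * t) ∘ Z := rfl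
  rw [h1, ← MeasurableSpace.comap_comp]
  congr 1
  apply le_antisymm
  · exact (measurable_const_mul c).comap_le
  · intro A hA
    refine ⟨(fun t : ℝ => c⁻¹ * t) ⁻¹' A, (measurable_const_mul c⁻¹) hA, ?_⟩
    ext t
    simp only [Set.mem_preimage]
    rw [inv_mul_cancel_left₀ hc]

/-- In the balanced two-class Gaussian model, the rescaled weight vector
`w_s = (⟨w,w*⟩_Σ / ‖w‖_Σ²) • w` is calibrated: `σ(w_sᵀX) = P(Y=1 | w_sᵀX)` a.s.
(so its calibration error vanishes), while its refinement error equals that of `w`. -/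
theorem stmt15 {p : ℕ} {Ω : Type*} [MeasurableSpace Ω] {μ : Measure Ω}
    [IsProbabilityMeasure μ]
    (S : Matrix (Fin p) (Fin p) ℝ) (hS : S.PosDef) (μv : Fin p → ℝ)
    (X : Ω → Fin p → ℝ) (Y : Ω → ℝ) (hX : Measurable X) (hY : Measurable Y)
    (hY1 : μ {ω | Y ω = 1} = 1 / 2) (hYm1 : μ {ω | Y ω = -1} = 1 / 2)
    (hpos : ∀ u : Fin p → ℝ, Measure.map (fun ω => u ⬝ᵥ X ω) (μ[|{ω | Y ω = 1}])
      = gaussianReal (u ⬝ᵥ μv) (Real.toNNReal (u ⬝ᵥ S.mulVec u)))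
    (hneg : ∀ u : Fin p → ℝ, Measure.map (fun ω => u ⬝ᵥ X ω) (μ[|{ω | Y ω = -1}])
      = gaussianReal (-(u ⬝ᵥ μv)) (Real.toNNReal (u ⬝ᵥ S.mulVec u)))
    (eℓ : ℝ → ℝ) (heℓ_meas : Measurable eℓ)
    (w : Fin p → ℝ) (hw : w ≠ 0) :
    (∀ᵐ ω ∂μ,
        sigmoid ((((w ⬝ᵥ S.mulVec ((2 : ℝ) • S⁻¹.mulVec μv)) / (w ⬝ᵥ S.mulVec w)) • w)
            ⬝ᵥ X ω)
          = MeasureTheory.condExp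
              (MeasurableSpace.comap
                (fun ω' =>
                  (((w ⬝ᵥ S.mulVec ((2 : ℝ) • S⁻¹.mulVec μv)) / (w ⬝ᵥ S.mulVec w)) • w)
                    ⬝ᵥ X ω') inferInstance) μ
              (fun ω' => if Y ω' = 1 then (1 : ℝ) else 0) ω)
      ∧ refR μ X Y eℓ
          (((w ⬝ᵥ S.mulVec ((2 : ℝ) • S⁻¹.mulVec μv)) / (w ⬝ᵥ S.mulVec w)) • w)
        = refR μ X Y eℓ w := by
  have hq : 0 < w ⬝ᵥ S.mulVec w := by
    have := hS.dotProduct_mulVec_pos hw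
    simpa using this
  have hm' : w ⬝ᵥ S.mulVec ((2:ℝ) • S⁻¹.mulVec μv) = 2 * (w ⬝ᵥ μv) := by
    rw [Matrix.mulVec_smul, Matrix.mulVec_mulVec,
      Matrix.mul_nonsing_inv _ (isUnit_iff_ne_zero.mpr hS.det_pos.ne'),
      Matrix.one_mulVec, dotProduct_smul, smul_eq_mul]
  set q : ℝ := w ⬝ᵥ S.mulVec w with hqdef
  set s : ℝ := (w ⬝ᵥ S.mulVec ((2:ℝ) • S⁻¹.mulVec μv)) / q with hsdef
  set u : Fin p → ℝ := s • w with hudef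
  have hs : s = 2 * (w ⬝ᵥ μv) / q := by rw [hsdef, hm']
  have hua : u ⬝ᵥ μv = s * (w ⬝ᵥ μv) := by
    rw [hudef, smul_dotProduct, smul_eq_mul]
  have huv : u ⬝ᵥ S.mulVec u = s * s * q := by
    rw [hudef, smul_dotProduct, Matrix.mulVec_smul, dotProduct_smul,
      smul_eq_mul, smul_eq_mul, hqdef]
    ring
  have hZmeas : ∀ (t : Fin p → ℝ), Measurable fun ω => t ⬝ᵥ X ω := by
    intro t
    have : (fun ω => t ⬝ᵥ X ω) = fun ω => ∑ i, t i * X ω i := rfl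
    rw [this]
    exact Finset.measurable_sum _
      (fun i _ => measurable_const.mul ((measurable_pi_apply i).comp hX))
  have hsq : s * q = 2 * (w ⬝ᵥ μv) := by
    rw [hs]; field_simp
  have huvnn : 0 ≤ u ⬝ᵥ S.mulVec u := by
    rw [huv]; nlinarith [hq, sq_nonneg s]
  have hc1 : (1:ℝ) * (Real.toNNReal (u ⬝ᵥ S.mulVec u) : ℝ) = 2 * (u ⬝ᵥ μv) := by
    rw [Real.coe_toNNReal _ huvnn, one_mul, huv, hua]
    linear_combination s * hsq
  have hpart1 := condexp_eq_sigmoid hY hY1 hYm1 (hZmeas u) (hpos u) (hneg u) hc1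
  constructor
  · filter_upwards [hpart1] with ω hω
    rw [← hω, one_mul]
  · by_cases hm0 : w ⬝ᵥ μv = 0
    · -- s = 0 case
      have hs0 : s = 0 := by rw [hs, hm0]; simp
      have hcw : (0:ℝ) * (Real.toNNReal (w ⬝ᵥ S.mulVec w) : ℝ) = 2 * (w ⬝ᵥ μv) := by
        rw [hm0]; ring
      have hcu : (0:ℝ) * (Real.toNNReal (u ⬝ᵥ S.mulVec u) : ℝ) = 2 * (u ⬝ᵥ μv) := by
        rw [hua, hm0]; ring
      have hw_ce := condexp_eq_sigmoid hY hY1 hYm1 (hZmeas w) (hpos w) (hneg w) hcw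
      have hu_ce := condexp_eq_sigmoid hY hY1 hYm1 (hZmeas u) (hpos u) (hneg u) hcu
      unfold refR
      apply integral_congr_ae
      filter_upwards [hw_ce, hu_ce] with ω e1 e2
      rw [← e1, ← e2, zero_mul, zero_mul]
    · -- s ≠ 0 case
      have hsne : s ≠ 0 := by
        rw [hs]
        exact div_ne_zero (by simpa using hm0) hq.ne'
      have hfun : (fun ω' => u ⬝ᵥ X ω') = fun ω' => s * (w ⬝ᵥ X ω') := by
        funext ω
        rw [hudef, smul_dotProduct, smul_eq_mul]
      unfold refR
      rw [hfun, comap_const_mul hsne]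
end
end
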